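/- Tweaked path lemma: With notation as in the path lemma, let ‖m,ρ,n‖' be identical to ‖m,ρ,n‖ except that its first assignment along ρ adds 1 mod 2 (i.e., f[b] := xᵢ[m] + 1 for the innermost step). Then in Alg(‖m,ρ,n‖'), for any term t with subterm s at path ρ, one has t[n] = s[m] + 1 (mod 2). In particular, t[n] ≠ s[m] always. -/

import Mathlib

open FirstOrder Language

attribute [local instance] Classical.propDecidable

/-- A path entry: an operation symbol together with an argument position. -/
abbrev PathEntry (L : Language) : Type _ := Σ n : ℕ, L.Functions n × Fin n

/-- `AtPath ρ t u` means: `u` is the (occurrence of a) subterm of `t` at the path `ρ`,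
read from the root of `t`. -/
inductive AtPath {L : Language} {α : Type*} :
    List (PathEntry L) → L.Term α → L.Term α → Prop
  | nil (t : L.Term α) : AtPath [] t t
  | cons {n : ℕ} (f : L.Functions n) (ts : Fin n → L.Term α) (i : Fin n)
      {ρ : List (PathEntry L)} {u : L.Term α} :
      AtPath ρ (ts i) u → AtPath (⟨n, f, i⟩ :: ρ) (Term.func f ts) u

/-- The algebra `Alg(‖m,ρ,n‖)` (or its tweaked version `Alg(‖m,ρ,n‖')` when `tweak = true`)
on `Z₂`-vectors, determined by a path `ρ = ρ₀ρ₁⋯ρⱼ` (position 0 is outermost) and a chain of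
indices `c` with `c 0 = n` and `c ρ.length = m`: the entry `ρₚ = fᵢ` contributes the
assignment `f[c p] := xᵢ[c (p+1)]`, except that when `tweak = true` the innermost assignment
(at `p = ρ.length - 1`) is `f[c p] := xᵢ[c (p+1)] + 1` (mod 2). All other components
default to `0`, and all sums are taken mod 2. -/
noncomputable def pathAlg (L : Language) (ρ : List (PathEntry L)) (c : ℕ → ℕ)
    (tweak : Bool) : L.Structure (ℕ → ZMod 2) where
  funMap := fun {k} f xs idx =>
    ∑ p ∈ Finset.range ρ.length,
      if hp : p < ρ.length then
        (if h : (ρ.get ⟨p, hp⟩).1 = k then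
          (if (h ▸ (ρ.get ⟨p, hp⟩).2.1) = f ∧ idx = c p then
            xs (Fin.cast h (ρ.get ⟨p, hp⟩).2.2) (c (p + 1)) +
              (if tweak ∧ p = ρ.length - 1 then 1 else 0)
          else 0)
        else 0)
      else 0
  RelMap := fun _ _ => False

/-- Tweaked path lemma: if `ρ` is a nonempty path with duplicate-free index chain `c`
(`c 0 = n`, `c ρ.length = m`, all indices distinct except possibly `m = n`), and `s` is a
subterm of `t` at path `ρ`, then in the tweaked algebra `Alg(‖m,ρ,n‖')` we have
`t[n] = s[m] + 1` (mod 2) for every valuation; in particular `t[n] ≠ s[m]` always. -/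
theorem tweaked_path_lemma {L : Language} {α : Type*} (m n : ℕ) (ρ : List (PathEntry L))
    (hρ : ρ ≠ []) (c : ℕ → ℕ) (hc0 : c 0 = n) (hcl : c ρ.length = m)
    (hdup : ∀ a b, a ≤ ρ.length → b ≤ ρ.length → c a = c b →
      a = b ∨ (a = 0 ∧ b = ρ.length) ∨ (a = ρ.length ∧ b = 0))
    (t s : L.Term α) (hpath : AtPath ρ t s) (v : α → ℕ → ZMod 2) :
    let _i : L.Structure (ℕ → ZMod 2) := pathAlg L ρ c true
    Term.realize v t n = Term.realize v s m + 1 ∧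
      Term.realize v t n ≠ Term.realize v s m := by
  intro _i
  have key : ∀ (σ : List (PathEntry L)) (t s : L.Term α), AtPath σ t s →
      ∀ q, q ≤ ρ.length → σ = ρ.drop q →
      Term.realize v t (c q) =
        Term.realize v s (c ρ.length) + (if q < ρ.length then 1 else 0) := by
    intro σ t s h
    induction h with
    | nil t =>
      intro q hq hσ
      have hql : q = ρ.length := by
        rcases lt_or_eq_of_le hq with h' | h'
        · exfalso
          have hd := List.drop_eq_getElem_cons (l := ρ) h'
          rw [← hσ] at hd
          simp at hd
          omega
        · exact h'
      subst hql
      simp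
    | @cons k f ts i ρ' u h ih =>
      intro q hq hσ
      have hq' : q < ρ.length := by
        rcases lt_or_eq_of_le hq with h' | h'
        · exact h'
        · subst h'
          rw [List.drop_length] at hσ
          simp at hσ
      rw [List.drop_eq_getElem_cons hq'] at hσ
      injection hσ with h1 h2
      have e : ρ[q] = (⟨k, f, i⟩ : PathEntry L) := h1.symm
      have hreal : Term.realize v (Term.func f ts) (c q) =
          Structure.funMap (L := L) (M := ℕ → ZMod 2) f
            (fun j => Term.realize v (ts j)) (c q) := by
        simp [Term.realize]
      rw [hreal]
      have hsum : Structure.funMap (L := L) (M := ℕ → ZMod 2) f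
            (fun j => Term.realize v (ts j)) (c q)
          = Term.realize v (ts i) (c (q + 1)) +
              (if q = ρ.length - 1 then 1 else 0) := by
        show (∑ p ∈ Finset.range ρ.length,
          if hp : p < ρ.length then
            (if hh : (ρ.get ⟨p, hp⟩).1 = k then
              (if (hh ▸ (ρ.get ⟨p, hp⟩).2.1) = f ∧ c q = c p then
                (fun j => Term.realize v (ts j)) (Fin.cast hh (ρ.get ⟨p, hp⟩).2.2) (c (p + 1)) +
                  (if true = true ∧ p = ρ.length - 1 then 1 else 0)
              else 0)
            else 0)
          else 0) = _
        rw [Finset.sum_eq_single q]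
        · rw [dif_pos hq']
          have e' : ρ.get ⟨q, hq'⟩ = (⟨k, f, i⟩ : PathEntry L) := by
            simpa using e
          rw [e']
          simp
        · intro p hp hpq
          simp only [Finset.mem_range] at hp
          rw [dif_pos hp]
          by_cases hh : (ρ.get ⟨p, hp⟩).1 = k
          · rw [dif_pos hh, if_neg]
            rintro ⟨-, hcp⟩
            rcases hdup q p (le_of_lt hq') (le_of_lt hp) hcp with h' | ⟨h', h''⟩ | ⟨h', h''⟩
            · exact hpq h'.symm
            · omega
            · omega
          · rw [dif_neg hh]
        · intro hq0
          simp [hq'] at hq0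
      rw [hsum, ih (q + 1) hq' h2]
      have hlt1 : (if q < ρ.length then (1 : ZMod 2) else 0) = 1 := if_pos hq'
      rw [hlt1]
      by_cases hc1 : q + 1 < ρ.length
      · have : ¬ q = ρ.length - 1 := by omega
        simp [hc1, this]
      · have : q = ρ.length - 1 := by omega
        simp [hc1, this]
        omega
  have hk := key ρ t s hpath 0 (Nat.zero_le _) List.drop_zero.symm
  rw [if_pos (List.length_pos_iff.mpr hρ)] at hk
  rw [hc0, hcl] at hk
  refine ⟨hk, ?_⟩
  rw [hk]
  intro h2
  have : (1 : ZMod 2) = 0 := by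
    have := add_right_cancel (a := (1 : ZMod 2)) (b := Term.realize v s m) (c := 0)
    rw [add_comm] at h2
    simpa using congrArg (· + (-(Term.realize v s m))) h2
  simp at this
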